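/- Let H be a complex Hilbert space and A a densely defined self-adjoint operator in H which is negative, i.e. ⟨Ah, h⟩ < 0 for every nonzero h ∈ dom A. Suppose ψ : [0, ∞) → H is continuous on [0, ∞), continuously differentiable on (0, ∞), satisfies ψ(x) ∈ dom A and ψ′(x) = −Aψ(x) for all x > 0, and is bounded: sup_{x ≥ 0} ‖ψ(x)‖ < ∞. Then ψ(x) = 0 for all x ≥ 0. -/

import Mathlib

open scoped ComplexOrder InnerProductSpace
open Filter Topology

noncomputable section

variable {H : Type*} [NormedAddCommGroup H] [InnerProductSpace ℂ H] [CompleteSpace H]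

/-- `J` is a signature operator: `J = J* = J⁻¹`. -/
def IsSignatureOperator (J : H →L[ℂ] H) : Prop :=
  IsSelfAdjoint J ∧ J.comp J = ContinuousLinearMap.id ℂ H

/-- The orthogonal projection onto `H₊ = ker (J - I)`, which equals `(I + J)/2`
for a signature operator `J`. -/
def Pplus (J : H →L[ℂ] H) : H →L[ℂ] H := (2⁻¹ : ℂ) • (ContinuousLinearMap.id ℂ H + J)

/-- The orthogonal projection onto `H₋ = ker (J + I)`, which equals `(I - J)/2`
for a signature operator `J`. -/
def Pminus (J : H →L[ℂ] H) : H →L[ℂ] H := (2⁻¹ : ℂ) • (ContinuousLinearMap.id ℂ H - J)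

/-- The composition `J ∘ L` of a bounded operator `J` with an unbounded operator `L`,
as an unbounded operator with the same domain as `L`. -/
def pmapComp (J : H →L[ℂ] H) (L : H →ₗ.[ℂ] H) : H →ₗ.[ℂ] H :=
  { domain := L.domain
    toFun := (J : H →ₗ[ℂ] H).comp L.toFun }

/-- `L` is a positive operator: `⟨L h, h⟩ > 0` for every nonzero `h ∈ dom L`. -/
def IsPositivePMap (L : H →ₗ.[ℂ] H) : Prop :=
  ∀ h : L.domain, (h : H) ≠ 0 → 0 < ⟪L h, (h : H)⟫_ℂ

/-- `B` is similar to a self-adjoint operator: there is a bounded operator `S` with bounded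
inverse mapping `dom B` onto the domain of a self-adjoint operator `A` such that
`A (S h) = S (B h)` for all `h ∈ dom B`. -/
def SimilarToSelfAdjoint (B : H →ₗ.[ℂ] H) : Prop :=
  ∃ (S : H ≃L[ℂ] H) (A : H →ₗ.[ℂ] H), IsSelfAdjoint A ∧
    (A.domain : Set H) = (fun h => S h) '' (B.domain : Set H) ∧
    ∀ (h : B.domain) (hSh : S (h : H) ∈ A.domain), A ⟨S (h : H), hSh⟩ = S (B h)

/-- `ψ` solves `ψ' = -B ψ + f` on the set `s` with a continuous derivative:
on `s`, `ψ` takes values in `dom B`, is differentiable with derivative `ψ'`,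
`ψ'` is continuous on `s`, and `ψ' x = -B (ψ x) + f x`. -/
def IsStrongSolutionOn (B : H →ₗ.[ℂ] H) (f : ℝ → H) (ψ : ℝ → H) (s : Set ℝ) : Prop :=
  ∃ ψ' : ℝ → H, ContinuousOn ψ' s ∧
    ∀ x ∈ s, HasDerivAt ψ (ψ' x) x ∧
      ∃ hx : ψ x ∈ B.domain, ψ' x = -(B ⟨ψ x, hx⟩) + f x

/-- If `A` is a densely defined negative self-adjoint operator and `ψ` is a
bounded solution of `dψ/dx = -Aψ` on `(0, ∞)`, continuous on `[0, ∞)`, then `ψ ≡ 0`. -/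
theorem statement9 (A : H →ₗ.[ℂ] H) (hdense : Dense (A.domain : Set H))
    (hsa : IsSelfAdjoint A)
    (hneg : ∀ h : A.domain, (h : H) ≠ 0 → ⟪A h, (h : H)⟫_ℂ < 0)
    (ψ : ℝ → H)
    (hcont : ContinuousOn ψ (Set.Ici 0))
    (hsol : IsStrongSolutionOn A (fun _ => 0) ψ (Set.Ioi 0))
    (hbdd : ∃ C : ℝ, ∀ x ∈ Set.Ici (0 : ℝ), ‖ψ x‖ ≤ C) :
    ∀ x ∈ Set.Ici (0 : ℝ), ψ x = 0 := by
  obtain ⟨ψ', hψ'cont, hψ'⟩ := hsol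
  obtain ⟨C, hC⟩ := hbdd
  have hsymm : ∀ (u v : A.domain), ⟪A u, (v : H)⟫_ℂ = ⟪(u : H), A v⟫_ℂ := by
    have h := A.adjoint_isFormalAdjoint hdense
    rw [LinearPMap.isSelfAdjoint_def] at hsa
    rw [hsa] at h
    exact h
  set g : ℝ → ℝ := fun x => ‖ψ x‖ ^ 2 with hgdef
  -- key midpoint inequality
  have key : ∀ x y : ℝ, 0 < x → 0 < y → g ((x + y) / 2) ^ 2 ≤ g x * g y := by
    intro x y hx hy
    set s := x + y with hs
    have hspos : 0 < s := by positivity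
    set φ : ℝ → ℂ := fun t => ⟪ψ (s - t), ψ t⟫_ℂ with hφdef
    have hφ : ∀ t ∈ Set.Ioo (0:ℝ) s, HasDerivAt φ 0 t := by
      intro t ht
      have ht1 : t ∈ Set.Ioi (0:ℝ) := ht.1
      have ht2 : s - t ∈ Set.Ioi (0:ℝ) := by
        simp only [Set.mem_Ioi]; linarith [ht.2]
      obtain ⟨hd1, hu, hequ⟩ := hψ' t ht1
      obtain ⟨hd2, hv, heqv⟩ := hψ' (s - t) ht2
      simp only [add_zero] at hequ heqv
      have hfd : HasDerivAt (fun u => ψ (s - u)) ((-1 : ℝ) • ψ' (s - t)) t :=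
        hd2.scomp t ((hasDerivAt_id t).const_sub s)
      have hinner := HasDerivAt.inner ℂ hfd hd1
      refine hinner.congr_deriv ?_
      rw [hequ, heqv]
      have e1 : ((-1 : ℝ) • -(A ⟨ψ (s - t), hv⟩)) = A ⟨ψ (s - t), hv⟩ := by
        rw [neg_one_smul ℝ, neg_neg]
      rw [e1, inner_neg_right]
      have e2 := hsymm ⟨ψ (s - t), hv⟩ ⟨ψ t, hu⟩
      simp only [Submodule.coe_mk] at e2 ⊢
      rw [e2]
      ring
    have hconst : ∀ a ∈ Set.Ioo (0:ℝ) s, ∀ b ∈ Set.Ioo (0:ℝ) s, a ≤ b → φ b = φ a := by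
      intro a ha b hb hab
      have hsub : Set.Icc a b ⊆ Set.Ioo 0 s := fun z hz =>
        ⟨lt_of_lt_of_le ha.1 hz.1, lt_of_le_of_lt hz.2 hb.2⟩
      exact constant_of_has_deriv_right_zero
        (fun z hz => (hφ z (hsub hz)).continuousAt.continuousWithinAt)
        (fun z hz => ((hφ z (hsub ⟨hz.1, le_of_lt hz.2⟩)).hasDerivWithinAt)) b ⟨hab, le_rfl⟩
    have hmem1 : x ∈ Set.Ioo (0:ℝ) s := ⟨hx, by simp only [hs]; linarith⟩
    have hmem2 : (x + y) / 2 ∈ Set.Ioo (0:ℝ) s := ⟨by linarith, by simp only [hs]; linarith⟩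
    have hφeq : φ ((x + y) / 2) = φ x := by
      rcases le_total x ((x + y) / 2) with h | h
      · exact hconst x hmem1 _ hmem2 h
      · exact (hconst _ hmem2 x hmem1 h).symm
    have hmid : s - (x + y) / 2 = (x + y) / 2 := by simp only [hs]; ring
    have hsx : s - x = y := by simp only [hs]; ring
    have h1 : (g ((x + y) / 2) : ℝ) ≤ ‖ψ x‖ * ‖ψ y‖ := by
      have hre : (φ ((x + y) / 2)).re = g ((x + y) / 2) := by
        simp only [hφdef, hmid, hgdef]
        rw [inner_self_eq_norm_sq_to_K]; norm_cast
      have hle : (φ ((x + y) / 2)).re ≤ ‖φ ((x + y) / 2)‖ :=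
        le_trans (le_abs_self _) (Complex.abs_re_le_norm _)
      rw [hre] at hle
      refine le_trans hle ?_
      rw [hφeq]
      simp only [hφdef, hsx]
      exact (norm_inner_le_norm (𝕜 := ℂ) _ _).trans_eq (mul_comm _ _)
    have h0 : (0:ℝ) ≤ g ((x + y) / 2) := by simp only [hgdef]; positivity
    calc g ((x + y) / 2) ^ 2 ≤ (‖ψ x‖ * ‖ψ y‖) ^ 2 := by
          exact pow_le_pow_left₀ h0 h1 2
      _ = g x * g y := by simp only [hgdef]; ring
  -- ψ vanishes on (0, ∞)
  have hzero : ∀ x ∈ Set.Ioi (0:ℝ), ψ x = 0 := by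
    intro a ha
    by_contra hne
    obtain ⟨hda, hu, hequ⟩ := hψ' a ha
    simp only [add_zero] at hequ
    have hginner : HasDerivAt (fun t => ⟪ψ t, ψ t⟫_ℂ)
        (⟪ψ a, ψ' a⟫_ℂ + ⟪ψ' a, ψ a⟫_ℂ) a := HasDerivAt.inner ℂ hda hda
    have hgre : HasDerivAt g ((⟪ψ a, ψ' a⟫_ℂ + ⟪ψ' a, ψ a⟫_ℂ).re) a := by
      have h2 := Complex.reCLM.hasFDerivAt.comp_hasDerivAt a hginner
      have hfe : g = fun t => Complex.reCLM ⟪ψ t, ψ t⟫_ℂ := by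
        funext t
        simp only [hgdef, Complex.reCLM_apply]
        rw [inner_self_eq_norm_sq_to_K]; norm_cast
      rw [hfe]
      exact h2
    set d := (⟪ψ a, ψ' a⟫_ℂ + ⟪ψ' a, ψ a⟫_ℂ).re with hd
    have hdpos : 0 < d := by
      have hn := hneg ⟨ψ a, hu⟩ hne
      rw [Complex.lt_def] at hn
      have hn1 : (⟪(A ⟨ψ a, hu⟩ : H), ψ a⟫_ℂ).re < 0 := hn.1
      have e1 : ⟪ψ a, ψ' a⟫_ℂ = -⟪ψ a, (A ⟨ψ a, hu⟩ : H)⟫_ℂ := by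
        rw [hequ, inner_neg_right]
      have e2 : ⟪ψ' a, ψ a⟫_ℂ = -⟪(A ⟨ψ a, hu⟩ : H), ψ a⟫_ℂ := by
        rw [hequ, inner_neg_left]
      have e3 : (⟪ψ a, (A ⟨ψ a, hu⟩ : H)⟫_ℂ).re = (⟪(A ⟨ψ a, hu⟩ : H), ψ a⟫_ℂ).re := by
        rw [← inner_conj_symm, Complex.conj_re]
      simp only [hd, e1, e2, Complex.add_re, Complex.neg_re]
      rw [e3]
      linarith
    have hslope := hasDerivAt_iff_tendsto_slope.mp hgre
    have hev : ∀ᶠ b in 𝓝[>] a, 0 < slope g a b := by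
      have h1 : ∀ᶠ b in 𝓝[≠] a, 0 < slope g a b :=
        hslope.eventually (eventually_gt_nhds hdpos)
      exact h1.filter_mono (nhdsWithin_mono a (fun z hz => ne_of_gt hz))
    obtain ⟨b, hbs, hab⟩ := (hev.and eventually_mem_nhdsWithin).exists
    rw [Set.mem_Ioi] at hab
    have hga : 0 < g a := by
      simp only [hgdef]
      exact pow_pos (norm_pos_iff.2 hne) 2
    have hgb : g a < g b := by
      rw [slope_def_field] at hbs
      have hba : 0 < b - a := by linarith
      have h2 := mul_pos hbs hba
      rw [div_mul_cancel₀ _ hba.ne'] at h2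
      linarith
    set r := g b / g a with hr
    have hr1 : 1 < r := (one_lt_div hga).2 hgb
    have hr0 : 0 < r := lt_trans one_pos hr1
    set X : ℕ → ℝ := fun n => a + n * (b - a) with hX
    have hXpos : ∀ n : ℕ, 0 < X n := by
      intro n
      have h1 : (0:ℝ) ≤ (n : ℝ) := Nat.cast_nonneg n
      have h2 : 0 < a := ha
      have h3 : 0 < b - a := by linarith
      simp only [hX]
      nlinarith
    have hmid2 : ∀ n : ℕ, (X n + X (n + 2)) / 2 = X (n + 1) := by
      intro n
      simp only [hX]
      push_cast
      ring
    have hind : ∀ n : ℕ, 0 < g (X n) ∧ r * g (X n) ≤ g (X (n + 1)) := by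
      intro n
      induction n with
      | zero =>
        have hX0 : X 0 = a := by simp [hX]
        have hX1 : X 1 = b := by simp [hX]
        constructor
        · rw [hX0]; exact hga
        · rw [hX0, hX1, hr, div_mul_cancel₀ _ hga.ne']
      | succ n ih =>
        obtain ⟨h0, h1⟩ := ih
        have hpos1 : 0 < g (X (n + 1)) := lt_of_lt_of_le (by positivity) h1
        refine ⟨hpos1, ?_⟩
        have hk := key (X n) (X (n + 2)) (hXpos n) (hXpos (n + 2))
        rw [hmid2 n] at hk
        nlinarith [mul_le_mul_of_nonneg_left h1 hpos1.le, hk, h0, hpos1]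
    have hgrow : ∀ n : ℕ, r ^ n * g a ≤ g (X n) := by
      intro n
      induction n with
      | zero => simp [hX]
      | succ n ih =>
        calc r ^ (n + 1) * g a = r * (r ^ n * g a) := by ring
          _ ≤ r * g (X n) := by
              exact mul_le_mul_of_nonneg_left ih hr0.le
          _ ≤ g (X (n + 1)) := (hind n).2
    have hbound : ∀ n : ℕ, g (X n) ≤ C ^ 2 := by
      intro n
      have h1 := hC (X n) (le_of_lt (hXpos n))
      have h2 : 0 ≤ ‖ψ (X n)‖ := norm_nonneg _
      simp only [hgdef]
      nlinarith
    obtain ⟨n, hn⟩ :=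
      ((tendsto_pow_atTop_atTop_of_one_lt hr1).eventually_gt_atTop (C ^ 2 / g a)).exists
    have h1 : C ^ 2 < r ^ n * g a := (div_lt_iff₀ hga).mp hn
    have h2 := hgrow n
    have h3 := hbound n
    linarith
  intro x hx
  rcases eq_or_lt_of_le (Set.mem_Ici.mp hx) with h0 | hpos
  · have hc0 : ContinuousWithinAt ψ (Set.Ici 0) 0 := hcont 0 Set.self_mem_Ici
    have ht : Filter.Tendsto ψ (𝓝[>] (0:ℝ)) (𝓝 (ψ 0)) :=
      hc0.tendsto.mono_left (nhdsWithin_mono 0 Set.Ioi_subset_Ici_self)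
    have ht0 : Filter.Tendsto ψ (𝓝[>] (0:ℝ)) (𝓝 0) := by
      refine Filter.Tendsto.congr' ?_ tendsto_const_nhds
      filter_upwards [self_mem_nhdsWithin] with z hz
      exact (hzero z hz).symm
    rw [← h0]
    exact tendsto_nhds_unique ht ht0
  · exact hzero x hpos


end
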